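/- Let G be a finite directed graph (with no loops) on the vertex set {1,…,n}, let q be a prime power, and let A be an n×n matrix over the finite field F_q that fits G, i.e., A_{ii} ≠ 0 for all i and A_{ij} = 0 whenever i ≠ j and (i,j) is not an edge of G. Then the null space ker A = { x ∈ F_q^n : A x = 0 } is an RDSS code for G over F_q, and its size is q^{n − rank(A)}. In particular, there exists an RDSS code for G over F_q of size q^{n − minrank_q(G)}, where minrank_q(G) is the minimum rank over F_q of a matrix fitting G. -/

import Mathlib

/-- A recoverable distributed storage system (RDSS) code for the directed graph with
adjacency relation `Adj` on `Fin n`, over alphabet `A`. -/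
def IsRDSS {n : ℕ} {A : Type*} (Adj : Fin n → Fin n → Prop) (C : Set (Fin n → A)) : Prop :=
  ∀ i : Fin n, ∀ x ∈ C, ∀ y ∈ C, (∀ j : Fin n, Adj i j → x j = y j) → x i = y i

lemma aux17 {n : ℕ} {F : Type} [Field F] [Fintype F]
    (Adj : Fin n → Fin n → Prop)
    (M : Matrix (Fin n) (Fin n) F)
    (hfit : (∀ i, M i i ≠ 0) ∧ ∀ i j, i ≠ j → ¬ Adj i j → M i j = 0) :
    IsRDSS Adj {x : Fin n → F | M.mulVec x = 0} ∧
      ({x : Fin n → F | M.mulVec x = 0}).ncard = Fintype.card F ^ (n - M.rank) := by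
  constructor
  · intro i x hx y hy hagree
    have hz : M.mulVec (x - y) = 0 := by
      rw [Matrix.mulVec_sub, Set.mem_setOf_eq.mp hx, Set.mem_setOf_eq.mp hy, sub_zero]
    have hi : M.mulVec (x - y) i = 0 := by rw [hz]; rfl
    rw [Matrix.mulVec, dotProduct] at hi
    have hsum : ∀ j ∈ Finset.univ, j ≠ i → M i j * (x - y) j = 0 := by
      intro j _ hj
      by_cases hA : Adj i j
      · simp [hagree j hA]
      · rw [hfit.2 i j (Ne.symm hj) hA, zero_mul]
    rw [Finset.sum_eq_single_of_mem i (Finset.mem_univ i) hsum] at hi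
    rcases mul_eq_zero.mp hi with h | h
    · exact absurd h (hfit.1 i)
    · exact sub_eq_zero.mp h
  · have hset : {x : Fin n → F | M.mulVec x = 0} = (LinearMap.ker M.mulVecLin : Set (Fin n → F)) := by
      ext x; simp [LinearMap.mem_ker, Matrix.mulVecLin_apply]
    have hrn : M.rank + Module.finrank F (LinearMap.ker M.mulVecLin) = n := by
      rw [Matrix.rank]
      simpa using LinearMap.finrank_range_add_finrank_ker M.mulVecLin
    have hk : Module.finrank F (LinearMap.ker M.mulVecLin) = n - M.rank := by omega
    haveI : Fintype (LinearMap.ker M.mulVecLin) := Fintype.ofFinite _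
    rw [hset, ← Nat.card_coe_set_eq]
    have hcongr : Nat.card ((LinearMap.ker M.mulVecLin : Set (Fin n → F)) : Type) =
        Nat.card (LinearMap.ker M.mulVecLin) := rfl
    rw [hcongr, Nat.card_eq_fintype_card, Module.card_eq_pow_finrank (K := F), hk]


/-- if a matrix `M` over the finite field `F` (of size `q`) fits
the directed graph `G`, then `ker M` is an RDSS code for `G` of size
`q^{n − rank M}`; in particular there is an RDSS code of size
`q^{n − minrank_q(G)}`. -/
theorem stmt17 {n : ℕ} (hn : 1 ≤ n) {F : Type} [Field F] [Fintype F] {q : ℕ}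
    (hq : Fintype.card F = q)
    (Adj : Fin n → Fin n → Prop) (hirr : ∀ i, ¬ Adj i i)
    (M : Matrix (Fin n) (Fin n) F)
    (hfit : (∀ i, M i i ≠ 0) ∧ ∀ i j, i ≠ j → ¬ Adj i j → M i j = 0) :
    (IsRDSS Adj {x : Fin n → F | M.mulVec x = 0} ∧
      ({x : Fin n → F | M.mulVec x = 0}).ncard = q ^ (n - M.rank)) ∧
    ∃ C : Set (Fin n → F), IsRDSS Adj C ∧
      C.ncard = q ^ (n - sInf {r : ℕ | ∃ B : Matrix (Fin n) (Fin n) F,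
        ((∀ i, B i i ≠ 0) ∧ ∀ i j, i ≠ j → ¬ Adj i j → B i j = 0) ∧ B.rank = r}) := by
  subst hq
  refine ⟨aux17 Adj M hfit, ?_⟩
  have hne : (Set.univ ∩ {r : ℕ | ∃ B : Matrix (Fin n) (Fin n) F,
      ((∀ i, B i i ≠ 0) ∧ ∀ i j, i ≠ j → ¬ Adj i j → B i j = 0) ∧ B.rank = r}).Nonempty :=
    ⟨M.rank, trivial, M, hfit, rfl⟩
  have hmem := Nat.sInf_mem (hne.mono (Set.inter_subset_right))
  obtain ⟨B, hBfit, hBrank⟩ := hmem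
  exact ⟨{x : Fin n → F | B.mulVec x = 0}, (aux17 Adj B hBfit).1,
    by rw [(aux17 Adj B hBfit).2, hBrank]⟩
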